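/- Every homotopy fibration sequence of loop spaces deloops fibers correctly: if F → E → B is a homotopy fibration sequence and i : F' → E is another map with a homotopy equivalence φ : F' → F over E, then the induced map of homotopy fibers of (E → B) computed from F' is a weak equivalence; in particular in the comparison of the fibrations G --incl--> G × Z --proj--> Z and G --Δ--> G × Z --q--> W via the shearing homotopy equivalence, the induced map of homotopy fibers ΩZ → ΩW is a weak homotopy equivalence. -/

import Mathlib

open scoped unitInterval
open ContinuousMap CategoryTheory

noncomputable section
/-- The map induced by a continuous map on homotopy groups (including `π₀` for `N = Fin 0`). -/
noncomputable def HomotopyGroup.inducedMap (N : Type*) {X Y : Type*} [TopologicalSpace X]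
    [TopologicalSpace Y] (f : C(X, Y)) (x : X) :
    HomotopyGroup N X x → HomotopyGroup N Y (f x) :=
  Quotient.map
    (fun p => ⟨f.comp p.1, fun y hy => by
      have := p.2 y hy
      simp [this]⟩)
    (fun p q h => h.map fun F => F.compContinuousMap f)

/-- A continuous map is a weak homotopy equivalence if it induces bijections on all homotopy
groups (including `π₀`, which is the case `n = 0`) at all basepoints. -/
def IsWeakHomotopyEquiv {X Y : Type*} [TopologicalSpace X] [TopologicalSpace Y]
    (f : C(X, Y)) : Prop :=
  ∀ (n : ℕ) (x : X), Function.Bijective (HomotopyGroup.inducedMap (Fin n) f x)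
/-- The homotopy fiber of a map over a point: pairs of a point of the source together with a
path from its image to the basepoint. -/
def HomotopyFiber {X Y : Type} [TopologicalSpace X] [TopologicalSpace Y] (f : C(X, Y))
    (y₀ : Y) : Type :=
  { p : X × C(I, Y) // p.2 0 = f p.1 ∧ p.2 1 = y₀ }

instance {X Y : Type} [TopologicalSpace X] [TopologicalSpace Y] (f : C(X, Y)) (y₀ : Y) :
    TopologicalSpace (HomotopyFiber f y₀) := by
  unfold HomotopyFiber; infer_instance

noncomputable section AuxT
open scoped Topology Topology.Homotopy
open ContinuousMap Set
namespace AuxT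

def cl : ℝ → I := Set.projIcc 0 1 zero_le_one
lemma continuous_cl : Continuous cl := continuous_projIcc
@[simp] lemma cl_coe (t : I) : cl (t : ℝ) = t := Set.projIcc_val zero_le_one t
@[simp] lemma cl_zero : cl 0 = 0 := cl_coe 0
@[simp] lemma cl_one : cl 1 = 1 := cl_coe 1
lemma coe_cl (r : ℝ) : (cl r : ℝ) = max 0 (min 1 r) := rfl

lemma symm_cl (r : ℝ) : unitInterval.symm (cl r) = cl (1 - r) := by
  ext
  rw [unitInterval.coe_symm_eq, coe_cl, coe_cl]
  rcases le_total r 0 with h | h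
  · rw [min_eq_right (by linarith), max_eq_left (by linarith),
      min_eq_left (by linarith), max_eq_right (by linarith)]
    ring
  · rcases le_total 1 r with h' | h'
    · rw [min_eq_left h', max_eq_right zero_le_one, min_eq_right (by linarith),
        max_eq_left (by linarith)]
      ring
    · rw [min_eq_right h', max_eq_right h, min_eq_right (by linarith),
        max_eq_right (by linarith)]

variable {N : Type} [Fintype N] [Nonempty N]

def md (t : I^N) : ℝ := Finset.univ.inf' Finset.univ_nonempty fun i => min (t i : ℝ) (1 - t i)

lemma continuous_md : Continuous (md (N := N)) :=
  Continuous.finset_inf'_apply Finset.univ_nonempty fun i _ =>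
    ((continuous_subtype_val.comp (continuous_apply i)).min
      (continuous_const.sub (continuous_subtype_val.comp (continuous_apply i))))

lemma md_nonneg (t : I^N) : 0 ≤ md t :=
  Finset.le_inf' _ _ fun i _ => le_min (t i).2.1 (by linarith [(t i).2.2])

lemma md_le (t : I^N) (i : N) : md t ≤ min (t i : ℝ) (1 - t i) :=
  Finset.inf'_le _ (Finset.mem_univ i)

lemma md_exists (t : I^N) : ∃ i, md t = min (t i : ℝ) (1 - t i) := by
  obtain ⟨i, _, h⟩ := Finset.exists_mem_eq_inf' (Finset.univ_nonempty (α := N))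
    fun i => min (t i : ℝ) (1 - t i)
  exact ⟨i, h⟩

lemma md_eq_zero_of_boundary {t : I^N} (h : t ∈ Cube.boundary N) : md t = 0 := by
  obtain ⟨i, hi⟩ := h
  refine le_antisymm (le_trans (md_le t i) ?_) (md_nonneg t)
  rcases hi with hi | hi <;> rw [hi] <;> simp

lemma boundary_of_md_eq_zero {t : I^N} (h : md t = 0) : t ∈ Cube.boundary N := by
  obtain ⟨i, hi⟩ := md_exists t
  rw [h] at hi
  rcases min_choice (t i : ℝ) (1 - t i) with hc | hc <;> rw [← hi] at hc
  · exact ⟨i, Or.inl (by ext; simpa using hc.symm)⟩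
  · refine ⟨i, Or.inr ?_⟩
    ext
    simp only [Set.Icc.coe_one]
    linarith [hc.symm]

def sq (s : ℝ) (t : I^N) : I^N := fun i => cl (((t i : ℝ) - s / 4) / (1 - s / 2))

lemma continuous_sq_pair : Continuous fun p : I × (I^N) => sq (p.1 : ℝ) p.2 := by
  refine continuous_pi fun i => continuous_cl.comp (Continuous.div ?_ ?_ ?_)
  · exact (continuous_subtype_val.comp ((continuous_apply i).comp continuous_snd)).sub
      ((continuous_subtype_val.comp continuous_fst).div_const 4)
  · exact continuous_const.sub ((continuous_subtype_val.comp continuous_fst).div_const 2)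
  · rintro ⟨s, t⟩
    have := s.2.2
    simp only
    intro hc
    norm_num at hc ⊢
    linarith

lemma continuous_sq_one : Continuous (sq (N := N) 1) := by
  have h : Continuous fun t : I^N => ((1 : I), t) := continuous_const.prodMk continuous_id
  simpa [Function.comp_def] using continuous_sq_pair.comp h

@[simp] lemma sq_zero (t : I^N) : sq 0 t = t := by
  funext i
  simp [sq]

lemma sq_mem_boundary {s : ℝ} (hs1 : s ≤ 1) {t : I^N} (h : md t = s / 4) :
    sq s t ∈ Cube.boundary N := by
  obtain ⟨i, hi⟩ := md_exists t
  rw [h] at hi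
  have hden : (0:ℝ) < 1 - s / 2 := by linarith
  rcases min_choice (t i : ℝ) (1 - t i) with hc | hc <;> rw [← hi] at hc
  · refine ⟨i, Or.inl ?_⟩
    have : ((t i : ℝ) - s / 4) / (1 - s / 2) = 0 := by rw [← hc]; simp
    simp [sq, this]
  · refine ⟨i, Or.inr ?_⟩
    have ht : (t i : ℝ) = 1 - s / 4 := by linarith [hc.symm]
    have : ((t i : ℝ) - s / 4) / (1 - s / 2) = 1 := by
      rw [ht]
      have h2 : (1:ℝ) - s / 4 - s / 4 = 1 - s / 2 := by ring
      rw [h2, div_self hden.ne']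
    simp [sq, this]

/-! ### The whisker construction -/

variable {Y : Type} [TopologicalSpace Y] {y₀ y₁ : Y}

/-- Transport of a generalized loop along a path: the inner subcube carries a rescaled copy of
the loop, the collar carries the path. -/
def wk (γ : Path y₀ y₁) (b : (I^N) → Y) (t : I^N) : Y :=
  if 1/4 ≤ md t then b (sq 1 t) else γ (cl (1 - 4 * md t))

lemma continuous_wk (γ : Path y₀ y₁) (b : C(I^N, Y))
    (hb : ∀ y ∈ Cube.boundary N, b y = y₀) : Continuous (wk γ ⇑b) := by
  refine Continuous.if_le (b.continuous.comp continuous_sq_one)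
    (γ.continuous.comp (continuous_cl.comp
      (continuous_const.sub (continuous_const.mul continuous_md))))
    continuous_const continuous_md fun t ht => ?_
  have hbd : sq 1 t ∈ Cube.boundary N := sq_mem_boundary le_rfl (by rw [← ht])
  rw [hb _ hbd, ← ht]
  have h4 : (1:ℝ) - 4 * (1/4) = 0 := by norm_num
  rw [h4, cl_zero, γ.source]

lemma wk_boundary (γ : Path y₀ y₁) (b : (I^N) → Y) {t : I^N} (ht : t ∈ Cube.boundary N) :
    wk γ b t = y₁ := by
  rw [wk, md_eq_zero_of_boundary ht, if_neg (by norm_num)]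
  norm_num

/-- `wk` as a bundled continuous map. -/
def wkMap (γ : Path y₀ y₁) (b : C(I^N, Y)) (hb : ∀ y ∈ Cube.boundary N, b y = y₀) :
    C(I^N, Y) := ⟨wk γ ⇑b, continuous_wk γ b hb⟩

@[simp] lemma wkMap_apply (γ : Path y₀ y₁) (b : C(I^N, Y)) (hb) (t : I^N) :
    wkMap γ b hb t = wk γ ⇑b t := rfl

/-- `wk` as a map of generalized loops. -/
def wkLoop (γ : Path y₀ y₁) (b : Ω^ N Y y₀) : Ω^ N Y y₁ :=
  ⟨wkMap γ b.1 b.2, fun y hy => wk_boundary γ _ hy⟩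


/-- Whiskering respects homotopy rel boundary. -/
lemma wkLoop_homotopic (γ : Path y₀ y₁) {a b : Ω^ N Y y₀} (h : GenLoop.Homotopic a b) :
    GenLoop.Homotopic (wkLoop γ a) (wkLoop γ b) := by
  obtain ⟨Q⟩ := h
  refine ⟨⟨⟨⟨fun p => if 1/4 ≤ md p.2 then Q (p.1, sq 1 p.2) else γ (cl (1 - 4 * md p.2)), ?_⟩,
      ?_, ?_⟩, ?_⟩⟩
  · refine Continuous.if_le
      (Q.continuous.comp (continuous_fst.prodMk (continuous_sq_one.comp continuous_snd)))
      (γ.continuous.comp (continuous_cl.comp (continuous_const.sub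
        (continuous_const.mul (continuous_md.comp continuous_snd)))))
      continuous_const (continuous_md.comp continuous_snd) ?_
    rintro ⟨s, t⟩ ht
    dsimp only at ht ⊢
    have hbd : sq 1 t ∈ Cube.boundary N := sq_mem_boundary le_rfl (by rw [← ht])
    rw [Q.eq_fst s hbd, a.2 _ hbd, ← ht]
    have h4 : (1:ℝ) - 4 * (1/4) = 0 := by norm_num
    rw [h4, cl_zero, γ.source]
  · intro t
    show (if 1/4 ≤ md t then Q (0, sq 1 t) else γ (cl (1 - 4 * md t))) = wk γ ⇑a.1 t
    rw [wk]
    split_ifs with hc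
    · rw [Q.apply_zero]
    · rfl
  · intro t
    show (if 1/4 ≤ md t then Q (1, sq 1 t) else γ (cl (1 - 4 * md t))) = wk γ ⇑b.1 t
    rw [wk]
    split_ifs with hc
    · rw [Q.apply_one]
    · rfl
  · intro s y hy
    have h0 := md_eq_zero_of_boundary hy
    show (if 1/4 ≤ md y then Q (s, sq 1 y) else γ (cl (1 - 4 * md y))) = wk γ ⇑a.1 y
    rw [if_neg (by rw [h0]; norm_num), wk_boundary γ _ hy, h0]
    have h4 : (1:ℝ) - 4 * 0 = 1 := by norm_num
    rw [h4, cl_one, γ.target]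

/-- Whiskering along the constant path is homotopic to the identity. -/
lemma refl_homotopic (b : Ω^ N Y y₀) :
    GenLoop.Homotopic b (wkLoop (Path.refl y₀) b) := by
  refine ⟨⟨⟨⟨fun p => if (p.1 : ℝ)/4 ≤ md p.2 then b.1 (sq (p.1 : ℝ) p.2) else y₀, ?_⟩,
      ?_, ?_⟩, ?_⟩⟩
  · refine Continuous.if_le (b.1.continuous.comp continuous_sq_pair) continuous_const
      ((continuous_subtype_val.comp continuous_fst).div_const 4)
      (continuous_md.comp continuous_snd) ?_
    rintro ⟨s, t⟩ ht
    dsimp only at ht ⊢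
    exact b.2 _ (sq_mem_boundary s.2.2 ht.symm)
  · intro t
    show (if ((0:I) : ℝ)/4 ≤ md t then b.1 (sq ((0:I) : ℝ) t) else y₀) = b.1 t
    have h0 : ((0:I) : ℝ) = 0 := rfl
    rw [if_pos (by rw [h0]; simpa using md_nonneg t), h0, sq_zero]
  · intro t
    show (if ((1:I) : ℝ)/4 ≤ md t then b.1 (sq ((1:I) : ℝ) t) else y₀) = wk (Path.refl y₀) ⇑b.1 t
    have h1 : ((1:I) : ℝ) = 1 := rfl
    rw [h1, wk]
    split_ifs with hc
    · rfl
    · simp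
  · intro s y hy
    have h0 := md_eq_zero_of_boundary hy
    show (if (s : ℝ)/4 ≤ md y then b.1 (sq (s : ℝ) y) else y₀) = b.1 y
    split_ifs with hc
    · have hs : (s : ℝ) = 0 := le_antisymm (by rw [h0] at hc; linarith) s.2.1
      rw [hs, sq_zero]
    · exact (b.2 y hy).symm

/-- Naturality: whiskering the `0`-endpoint of a homotopy along the track of the basepoint is
homotopic (rel boundary) to the constant-whiskered `1`-endpoint. -/
lemma nat_homotopic {X : Type} [TopologicalSpace X] (K : C(X × I, Y)) (x : X)
    {w₀ w₁ : Y} (γ : Path w₀ w₁) (hγ : ∀ u, γ u = K (x, u))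
    (a : C(I^N, X)) (ha : ∀ t ∈ Cube.boundary N, a t = x)
    (bf bg : C(I^N, Y)) (hbf : ∀ t, bf t = K (a t, 0)) (hbg : ∀ t, bg t = K (a t, 1))
    (hbf' : ∀ y ∈ Cube.boundary N, bf y = w₀)
    (hbg' : ∀ y ∈ Cube.boundary N, bg y = w₁) :
    (wkMap γ bf hbf').HomotopicRel (wkMap (Path.refl w₁) bg hbg')
      (Cube.boundary N) := by
  refine ⟨⟨⟨⟨fun p => if 1/4 ≤ md p.2 then K (a (sq 1 p.2), p.1)
      else K (x, cl (max (p.1 : ℝ) (1 - 4 * md p.2))), ?_⟩, ?_, ?_⟩, ?_⟩⟩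
  · refine Continuous.if_le
      (K.continuous.comp ((a.continuous.comp (continuous_sq_one.comp continuous_snd)).prodMk
        continuous_fst))
      (K.continuous.comp (continuous_const.prodMk (continuous_cl.comp
        ((continuous_subtype_val.comp continuous_fst).max (continuous_const.sub
          (continuous_const.mul (continuous_md.comp continuous_snd)))))))
      continuous_const (continuous_md.comp continuous_snd) ?_
    rintro ⟨s, t⟩ ht
    dsimp only at ht ⊢
    have hbd : sq 1 t ∈ Cube.boundary N := sq_mem_boundary le_rfl (by rw [← ht])
    rw [ha _ hbd, ← ht]
    have h4 : (1:ℝ) - 4 * (1/4) = 0 := by norm_num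
    rw [h4, max_eq_left s.2.1, cl_coe]
  · intro t
    show (if 1/4 ≤ md t then K (a (sq 1 t), 0)
        else K (x, cl (max ((0:I) : ℝ) (1 - 4 * md t)))) = wk γ ⇑bf t
    have h0 : ((0:I) : ℝ) = 0 := rfl
    rw [wk]
    split_ifs with hc
    · rw [hbf]
    · have hlt : md t < 1/4 := lt_of_not_ge hc
      rw [h0, max_eq_right (by linarith), hγ]
  · intro t
    show (if 1/4 ≤ md t then K (a (sq 1 t), 1)
        else K (x, cl (max ((1:I) : ℝ) (1 - 4 * md t)))) = wk (Path.refl w₁) ⇑bg t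
    have h1 : ((1:I) : ℝ) = 1 := rfl
    rw [wk]
    split_ifs with hc
    · rw [hbg]
    · have := md_nonneg t
      rw [h1, max_eq_left (by linarith), cl_one]
      show K (x, 1) = (Path.refl w₁) (cl (1 - 4 * md t))
      rw [Path.refl_apply, ← hγ 1, γ.target]
  · intro s y hy
    have h0 := md_eq_zero_of_boundary hy
    show (if 1/4 ≤ md y then K (a (sq 1 y), s)
        else K (x, cl (max (s : ℝ) (1 - 4 * md y)))) = wk γ ⇑bf y
    rw [if_neg (by rw [h0]; norm_num), wk_boundary γ _ hy, h0]
    have h4 : (1:ℝ) - 4 * 0 = 1 := by norm_num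
    rw [h4, max_eq_right s.2.2, cl_one, ← hγ 1, γ.target]

/-- Double whisker along a path and its inverse is homotopic to the double whisker along
constant paths. -/
lemma symm_wk_homotopic (γ : Path y₀ y₁) (a : Ω^ N Y y₀) :
    GenLoop.Homotopic (wkLoop γ.symm (wkLoop γ a))
      (wkLoop (Path.refl y₀) (wkLoop (Path.refl y₀) a)) := by
  refine ⟨⟨⟨⟨fun p => if 1/4 ≤ md p.2 then
      (if 1/4 ≤ md (sq 1 p.2) then a.1 (sq 1 (sq 1 p.2))
        else γ (cl ((1 - (p.1 : ℝ)) * (1 - 4 * md (sq 1 p.2)))))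
      else γ (cl ((1 - (p.1 : ℝ)) * (4 * md p.2))), ?_⟩, ?_, ?_⟩, ?_⟩⟩
  · have hsub : Continuous fun p : I × (I^N) => 1 - (p.1 : ℝ) :=
      continuous_const.sub (continuous_subtype_val.comp continuous_fst)
    have hmds : Continuous fun p : I × (I^N) => md (sq 1 p.2) :=
      continuous_md.comp (continuous_sq_one.comp continuous_snd)
    have hinner : Continuous fun p : I × (I^N) =>
        (if 1/4 ≤ md (sq 1 p.2) then a.1 (sq 1 (sq 1 p.2))
          else γ (cl ((1 - (p.1 : ℝ)) * (1 - 4 * md (sq 1 p.2))))) := by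
      refine Continuous.if_le
        (a.1.continuous.comp (continuous_sq_one.comp (continuous_sq_one.comp continuous_snd)))
        (γ.continuous.comp (continuous_cl.comp
          (hsub.mul (continuous_const.sub (continuous_const.mul hmds)))))
        continuous_const hmds ?_
      rintro ⟨s, t⟩ ht
      dsimp only at ht ⊢
      have hbd : sq 1 (sq 1 t) ∈ Cube.boundary N := sq_mem_boundary le_rfl (by rw [← ht])
      rw [a.2 _ hbd, ← ht]
      have h4 : (1 - (s:ℝ)) * ((1:ℝ) - 4 * (1/4)) = 0 := by ring
      rw [h4, cl_zero, γ.source]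
    refine Continuous.if_le hinner
      (γ.continuous.comp (continuous_cl.comp
        (hsub.mul (continuous_const.mul (continuous_md.comp continuous_snd)))))
      continuous_const (continuous_md.comp continuous_snd) ?_
    rintro ⟨s, t⟩ ht
    dsimp only at ht ⊢
    have hbd : sq 1 t ∈ Cube.boundary N := sq_mem_boundary le_rfl (by rw [← ht])
    have hmd0 : md (sq 1 t) = 0 := md_eq_zero_of_boundary hbd
    rw [if_neg (by rw [hmd0]; norm_num), hmd0, ← ht]
    norm_num
  · intro t
    show (if 1/4 ≤ md t then
        (if 1/4 ≤ md (sq 1 t) then a.1 (sq 1 (sq 1 t))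
          else γ (cl ((1 - ((0:I) : ℝ)) * (1 - 4 * md (sq 1 t)))))
        else γ (cl ((1 - ((0:I) : ℝ)) * (4 * md t)))) = wk γ.symm (wk γ ⇑a.1) t
    have h0 : ((0:I) : ℝ) = 0 := rfl
    rw [h0, wk, wk]
    split_ifs with hc hc2
    · rfl
    · norm_num
    · rw [Path.symm_apply]
      show _ = γ (σ (cl (1 - 4 * md t)))
      rw [symm_cl]
      norm_num
  · intro t
    show (if 1/4 ≤ md t then
        (if 1/4 ≤ md (sq 1 t) then a.1 (sq 1 (sq 1 t))
          else γ (cl ((1 - ((1:I) : ℝ)) * (1 - 4 * md (sq 1 t)))))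
        else γ (cl ((1 - ((1:I) : ℝ)) * (4 * md t))))
        = wk (Path.refl y₀) (wk (Path.refl y₀) ⇑a.1) t
    have h1 : ((1:I) : ℝ) = 1 := rfl
    rw [h1, wk, wk]
    split_ifs with hc hc2
    · rfl
    · have h4 : ((1:ℝ) - 1) * (1 - 4 * md (sq 1 t)) = 0 := by ring
      rw [h4, cl_zero, γ.source]
      simp
    · have h4 : ((1:ℝ) - 1) * (4 * md t) = 0 := by ring
      rw [h4, cl_zero, γ.source]
      simp
  · intro s y hy
    have h0 := md_eq_zero_of_boundary hy
    show (if 1/4 ≤ md y then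
        (if 1/4 ≤ md (sq 1 y) then a.1 (sq 1 (sq 1 y))
          else γ (cl ((1 - (s : ℝ)) * (1 - 4 * md (sq 1 y)))))
        else γ (cl ((1 - (s : ℝ)) * (4 * md y)))) = wk γ.symm (wk γ ⇑a.1) y
    rw [if_neg (by rw [h0]; norm_num), wk_boundary γ.symm _ hy, h0]
    have h4 : (1 - (s:ℝ)) * (4 * 0) = 0 := by ring
    rw [h4, cl_zero, γ.source]


/-! ### Transport along paths and homotopy invariance -/

/-- Transport of homotopy classes along a path. -/
def transport (γ : Path y₀ y₁) : HomotopyGroup N Y y₀ → HomotopyGroup N Y y₁ :=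
  Quotient.map (wkLoop γ) fun _ _ h => wkLoop_homotopic γ h

lemma transport_symm_transport (γ : Path y₀ y₁) (q : HomotopyGroup N Y y₀) :
    transport γ.symm (transport γ q) = q := by
  induction q using Quotient.ind with
  | _ a =>
    refine Quotient.sound ?_
    have h2 : GenLoop.Homotopic (wkLoop (Path.refl y₀) (wkLoop (Path.refl y₀) a))
        (wkLoop (Path.refl y₀) a) :=
      wkLoop_homotopic (Path.refl y₀) (GenLoop.Homotopic.symm (refl_homotopic a))
    exact ((symm_wk_homotopic γ a).trans h2).trans
      (GenLoop.Homotopic.symm (refl_homotopic a))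

lemma transport_bijective (γ : Path y₀ y₁) : Function.Bijective (transport (N := N) γ) :=
  Function.bijective_iff_has_inverse.2 ⟨transport γ.symm, transport_symm_transport γ,
    fun q => by have h := transport_symm_transport γ.symm q; rwa [Path.symm_symm] at h⟩

/-- The image of a generalized loop under a continuous map. -/
def pushLoop {X : Type} [TopologicalSpace X] (f : C(X, Y)) (x : X) (a : Ω^ N X x) :
    Ω^ N Y (f x) :=
  ⟨f.comp a.1, fun y hy => by rw [ContinuousMap.comp_apply, a.2 y hy]⟩

lemma inducedMap_mk {X : Type} [TopologicalSpace X] (f : C(X, Y)) (x : X) (a : Ω^ N X x) :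
    HomotopyGroup.inducedMap N f x (Quotient.mk _ a) = Quotient.mk _ (pushLoop f x a) := rfl

/-- Homotopy invariance, positive-dimensional case: a homotopy `K` from `f` to `g` induces,
at each basepoint, a bijection of homotopy groups commuting with the induced maps. -/
lemma key' {X : Type} [TopologicalSpace X] (f g : C(X, Y)) (K : C(X × I, Y))
    (h0 : ∀ z, K (z, 0) = f z) (h1 : ∀ z, K (z, 1) = g z) (x : X) :
    ∃ β : HomotopyGroup N Y (f x) → HomotopyGroup N Y (g x), Function.Bijective β ∧
      ∀ q, HomotopyGroup.inducedMap N g x q = β (HomotopyGroup.inducedMap N f x q) := by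
  have hc : Continuous fun u : I => K (x, u) :=
    K.continuous.comp (Continuous.prodMk_right x)
  let γ : Path (f x) (g x) := ⟨⟨fun u => K (x, u), hc⟩, h0 x, h1 x⟩
  refine ⟨transport γ, transport_bijective γ, ?_⟩
  intro q
  induction q using Quotient.ind with
  | _ a =>
    rw [inducedMap_mk, inducedMap_mk]
    show _ = Quotient.mk _ (wkLoop γ (pushLoop f x a))
    refine Quotient.sound ?_
    have Hnat := nat_homotopic (N := N) K x γ (fun u => rfl) a.1 a.2
      (f.comp a.1) (g.comp a.1) (fun t => (h0 (a.1 t)).symm) (fun t => (h1 (a.1 t)).symm)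
      (pushLoop f x a).2 (pushLoop g x a).2
    have H2 := refl_homotopic (pushLoop g x a)
    exact ContinuousMap.HomotopicRel.trans H2 (ContinuousMap.HomotopicRel.symm Hnat)

/-- Homotopy invariance, dimension-zero case. -/
lemma key0 {X : Type} [TopologicalSpace X] (f g : C(X, Y)) (K : C(X × I, Y))
    (h0 : ∀ z, K (z, 0) = f z) (h1 : ∀ z, K (z, 1) = g z) (x : X) :
    ∃ β : HomotopyGroup (Fin 0) Y (f x) → HomotopyGroup (Fin 0) Y (g x),
      Function.Bijective β ∧
      ∀ q, HomotopyGroup.inducedMap (Fin 0) g x q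
        = β (HomotopyGroup.inducedMap (Fin 0) f x q) := by
  have hbdry : ∀ (w : Y) (b : C(I^(Fin 0), Y)), b ∈ GenLoop (Fin 0) Y w :=
    fun w b y hy => hy.elim fun i _ => i.elim0
  refine ⟨Quotient.map (fun b => ⟨b.1, hbdry _ _⟩) (fun b c h => h), ?_, ?_⟩
  · refine Function.bijective_iff_has_inverse.2
      ⟨Quotient.map (fun b => ⟨b.1, hbdry _ _⟩) (fun b c h => h), ?_, ?_⟩ <;>
    · intro q
      induction q using Quotient.ind with
      | _ a => exact congrArg (Quotient.mk _) (Subtype.ext rfl)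
  · intro q
    induction q using Quotient.ind with
    | _ a =>
      refine Quotient.sound ?_
      refine ⟨⟨⟨⟨fun z => K (a.1 z.2, unitInterval.symm z.1), ?_⟩, ?_, ?_⟩, ?_⟩⟩
      · exact K.continuous.comp ((a.1.continuous.comp continuous_snd).prodMk
          (unitInterval.continuous_symm.comp continuous_fst))
      · intro t
        show K (a.1 t, unitInterval.symm 0) = _
        rw [unitInterval.symm_zero, h1]
        rfl
      · intro t
        show K (a.1 t, unitInterval.symm 1) = _
        rw [unitInterval.symm_one, h0]
        rfl
      · intro s y hy
        exact (hy.elim fun i _ => i.elim0)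

end AuxT

namespace AuxT

/-- Homotopy invariance of the induced maps on all homotopy groups `π_n`. -/
lemma key {X Y : Type} [TopologicalSpace X] [TopologicalSpace Y] (n : ℕ) (f g : C(X, Y))
    (K : C(X × I, Y)) (h0 : ∀ z, K (z, 0) = f z) (h1 : ∀ z, K (z, 1) = g z) (x : X) :
    ∃ β : HomotopyGroup (Fin n) Y (f x) → HomotopyGroup (Fin n) Y (g x),
      Function.Bijective β ∧
      ∀ q, HomotopyGroup.inducedMap (Fin n) g x q
        = β (HomotopyGroup.inducedMap (Fin n) f x q) := by
  cases n with
  | zero => exact key0 f g K h0 h1 x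
  | succ m => exact key' f g K h0 h1 x

lemma inducedMap_id {N X : Type} [TopologicalSpace X] (x : X) (q : HomotopyGroup N X x) :
    HomotopyGroup.inducedMap N (ContinuousMap.id X) x q = q := by
  induction q using Quotient.ind with
  | _ a => exact congrArg (Quotient.mk _) (Subtype.ext (ContinuousMap.id_comp a.1))

lemma inducedMap_comp {N X Y Z : Type} [TopologicalSpace X] [TopologicalSpace Y]
    [TopologicalSpace Z] (f : C(X, Y)) (g : C(Y, Z)) (x : X) (q : HomotopyGroup N X x) :
    HomotopyGroup.inducedMap N (g.comp f) x q
      = HomotopyGroup.inducedMap N g (f x) (HomotopyGroup.inducedMap N f x q) := by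
  induction q using Quotient.ind with
  | _ a => exact congrArg (Quotient.mk _) (Subtype.ext (ContinuousMap.comp_assoc g f a.1))

/-- A homotopy equivalence induces bijections on all homotopy groups at all basepoints. -/
lemma bij_of_homotopyEquiv {X Y : Type} [TopologicalSpace X] [TopologicalSpace Y]
    (e : ContinuousMap.HomotopyEquiv X Y) (n : ℕ) (x : X) :
    Function.Bijective (HomotopyGroup.inducedMap (Fin n) e.toFun x) := by
  obtain ⟨KL⟩ := e.left_inv
  obtain ⟨KR⟩ := e.right_inv
  obtain ⟨β₁, hβ₁, hn₁⟩ := key n (e.invFun.comp e.toFun) (ContinuousMap.id X)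
    (KL.toContinuousMap.comp ⟨Prod.swap, continuous_swap⟩)
    (fun z => KL.apply_zero z) (fun z => KL.apply_one z) x
  obtain ⟨β₂, hβ₂, hn₂⟩ := key n (e.toFun.comp e.invFun) (ContinuousMap.id Y)
    (KR.toContinuousMap.comp ⟨Prod.swap, continuous_swap⟩)
    (fun z => KR.apply_zero z) (fun z => KR.apply_one z) (e.toFun x)
  set A := HomotopyGroup.inducedMap (Fin n) e.toFun x with hA
  set B := HomotopyGroup.inducedMap (Fin n) e.invFun (e.toFun x) with hB
  set C := HomotopyGroup.inducedMap (Fin n) e.toFun (e.invFun (e.toFun x)) with hC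
  have hBA : ∀ q, β₁ (B (A q)) = q := by
    intro q
    have h := hn₁ q
    rw [inducedMap_id, inducedMap_comp] at h
    exact h.symm
  have hCB : ∀ q, β₂ (C (B q)) = q := by
    intro q
    have h := hn₂ q
    rw [inducedMap_id, inducedMap_comp] at h
    exact h.symm
  have hBAsurj : Function.Surjective fun q => B (A q) := by
    intro r
    refine ⟨β₁ r, hβ₁.injective ?_⟩
    rw [hBA (β₁ r)]
  have hBinj : Function.Injective B := by
    intro r₁ r₂ h
    have := congrArg β₂ (congrArg C h)
    rwa [hCB, hCB] at this
  constructor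
  · intro q₁ q₂ h
    have := congrArg β₁ (congrArg B h)
    rwa [hBA, hBA] at this
  · intro r
    obtain ⟨q, hq⟩ := hBAsurj (B r)
    exact ⟨q, hBinj hq⟩

end AuxT

end AuxT

section Stmt19

variable {F F' E B : Type} [TopologicalSpace F] [TopologicalSpace F'] [TopologicalSpace E]
  [TopologicalSpace B]

/-- The canonical comparison map from `F` to the homotopy fiber of `p : E → B`, for a map
`f : F → E` with `p ∘ f` constant at the basepoint. -/
def fiberComparison (p : C(E, B)) (b₀ : B) (f : C(F, E)) (hconst : ∀ x, p (f x) = b₀) :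
    C(F, HomotopyFiber p b₀) :=
  ⟨fun x => ⟨(f x, ContinuousMap.const I b₀), (hconst x).symm, rfl⟩,
    Continuous.subtype_mk (f.continuous.prodMk continuous_const) _⟩

/-- The comparison map from `F'` to the homotopy fiber of `p` induced by a map `i : F' → E`
together with a homotopy `H` from `i` to a map into the fiber. -/
def fiberComparisonOfHomotopy (p : C(E, B)) (b₀ : B) (i : C(F', E))
    (H : C(F' × I, E)) (h1 : ∀ x, p (H (x, 1)) = b₀) (h0 : ∀ x, H (x, 0) = i x) :
    C(F', HomotopyFiber p b₀) :=
  ⟨fun x => ⟨(i x, (p.comp H).curry x), by simp [h0 x], by simp [h1 x]⟩,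
    Continuous.subtype_mk (i.continuous.prodMk (p.comp H).curry.continuous) _⟩

/-- **Comparison of homotopy fibers.**  If `F → E → B` is a homotopy fibration sequence
(i.e. the canonical map from `F` to the homotopy fiber of `p` is a weak equivalence), and
`i : F' → E` is another map equipped with a homotopy equivalence `φ : F' → F` over `E`
(witnessed by a homotopy `H` from `i` to `f ∘ φ`), then the induced comparison map from `F'`
to the homotopy fiber of `p` is a weak homotopy equivalence.  (In the shearing situation of
the grouplike monoid `G` acting on `Z`, applied to the trivial fibration `G × Z → Z` and
`q : G × Z → W`, this yields the weak equivalence `Ω Z ≃ Ω W` of homotopy fibers.) -/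
theorem fiberComparison_weakEquiv
    (p : C(E, B)) (b₀ : B) (f : C(F, E)) (hconst : ∀ x, p (f x) = b₀)
    (hfib : IsWeakHomotopyEquiv (fiberComparison p b₀ f hconst))
    (i : C(F', E)) (φ : C(F', F))
    (hφ : ∃ e : ContinuousMap.HomotopyEquiv F' F, ⇑e.toFun = ⇑φ)
    (H : C(F' × I, E)) (h0 : ∀ x, H (x, 0) = i x) (hend : ∀ x, H (x, 1) = f (φ x)) :
    IsWeakHomotopyEquiv
      (fiberComparisonOfHomotopy p b₀ i H
        (fun x => by rw [hend x, hconst]) h0) := by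
  obtain ⟨e, he⟩ := hφ
  have hφe : φ = e.toFun := DFunLike.coe_injective he.symm
  intro n x
  -- the homotopy between the two comparison maps, inside the homotopy fiber
  let sw : C((F' × I) × I, F' × I) := ⟨fun q => (q.1.1, max q.1.2 q.2),
    ((continuous_fst.comp continuous_fst).prodMk
      ((continuous_snd.comp continuous_fst).max continuous_snd))⟩
  let bigB : C((F' × I) × I, B) := p.comp (H.comp sw)
  have hmem : ∀ q : F' × I, ((H q, bigB.curry q) : E × C(I, B)) ∈
      {pr : E × C(I, B) | pr.2 0 = p pr.1 ∧ pr.2 1 = b₀} := by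
    intro q
    constructor
    · show p (H (q.1, max q.2 0)) = p (H q)
      rw [max_eq_left (unitInterval.nonneg' : (0:I) ≤ q.2)]
    · show p (H (q.1, max q.2 1)) = b₀
      rw [max_eq_right (unitInterval.le_one' : q.2 ≤ (1:I)), hend, hconst]
  let G : C(F' × I, HomotopyFiber p b₀) :=
    ⟨fun q => ⟨(H q, bigB.curry q), hmem q⟩,
      Continuous.subtype_mk (H.continuous.prodMk bigB.curry.continuous) _⟩
  have hG0 : ∀ z, G (z, 0) =
      fiberComparisonOfHomotopy p b₀ i H (fun x => by rw [hend x, hconst]) h0 z := by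
    intro z
    refine Subtype.ext (Prod.ext (h0 z) (ContinuousMap.ext fun t => ?_))
    show p (H (z, max 0 t)) = p (H (z, t))
    rw [max_eq_right (unitInterval.nonneg' : (0:I) ≤ t)]
  have hG1 : ∀ z, G (z, 1) = ((fiberComparison p b₀ f hconst).comp φ) z := by
    intro z
    refine Subtype.ext (Prod.ext (hend z) (ContinuousMap.ext fun t => ?_))
    show p (H (z, max 1 t)) = b₀
    rw [max_eq_left (unitInterval.le_one' : t ≤ (1:I)), hend, hconst]
  obtain ⟨β, hβ, hnat⟩ := AuxT.key n
    (fiberComparisonOfHomotopy p b₀ i H (fun x => by rw [hend x, hconst]) h0)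
    ((fiberComparison p b₀ f hconst).comp φ) G hG0 hG1 x
  have hrhs : Function.Bijective
      (HomotopyGroup.inducedMap (Fin n) ((fiberComparison p b₀ f hconst).comp φ) x) := by
    have hcomp : ∀ q, HomotopyGroup.inducedMap (Fin n)
        ((fiberComparison p b₀ f hconst).comp φ) x q
        = HomotopyGroup.inducedMap (Fin n) (fiberComparison p b₀ f hconst) (φ x)
          (HomotopyGroup.inducedMap (Fin n) φ x q) :=
      AuxT.inducedMap_comp φ (fiberComparison p b₀ f hconst) x
    have hφbij : Function.Bijective (HomotopyGroup.inducedMap (Fin n) φ x) := by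
      rw [hφe]
      exact AuxT.bij_of_homotopyEquiv e n x
    have := Function.Bijective.comp (hfib n (φ x)) hφbij
    convert this using 1
    funext q
    exact hcomp q
  constructor
  · intro q₁ q₂ h
    have := congrArg β h
    rw [← hnat, ← hnat] at this
    exact hrhs.injective this
  · intro r
    obtain ⟨q, hq⟩ := hrhs.surjective (β r)
    refine ⟨q, hβ.injective ?_⟩
    rw [← hnat, hq]


end Stmt19

end
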